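/- Equip ℕ with the topology in which a set is open if and only if it is downward closed. Let E = {n ∈ ℕ : n is even} and define φ : 𝒫(ℕ) → 𝒫(ℕ) by φ(A) = A ∩ closure(closure(A) ∩ Aᶜ). Then for every j ∈ ℕ, the j-th iterate satisfies φ^[j](E) = {n ∈ ℕ : n is even and 2j ≤ n} = E ∩ [2j, ∞). -/
import Mathlib


/-- The topology on `ℕ` in which a set is open if and only if it is downward closed
(the lower Alexandrov topology of the usual order). -/
def lowerTopology : TopologicalSpace ℕ where
  IsOpen U := ∀ ⦃m n : ℕ⦄, n ∈ U → m ≤ n → m ∈ U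
  isOpen_univ := fun _ _ _ _ => trivial
  isOpen_inter := fun _ _ hs ht _ _ hn hmn => ⟨hs hn.1 hmn, ht hn.2 hmn⟩
  isOpen_sUnion := fun _ hS _ _ hn hmn => by
    obtain ⟨s, hsS, hns⟩ := hn
    exact ⟨s, hsS, hS s hsS hns hmn⟩

/-- The operation `φ(A) = A ∩ k(kA ∩ Aᶜ)` on subsets of `ℕ`, where `k` is the closure in the
lower topology. -/
def kuratowskiPhi (A : Set ℕ) : Set ℕ :=
  A ∩ @closure ℕ lowerTopology (@closure ℕ lowerTopology A ∩ Aᶜ)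

lemma lower_closure_eq (A : Set ℕ) :
    @closure ℕ lowerTopology A = {n | ∃ a ∈ A, a ≤ n} := by
  letI := lowerTopology
  apply Set.Subset.antisymm
  · apply closure_minimal (t := {n | ∃ a ∈ A, a ≤ n}) (fun a ha => ⟨a, ha, le_refl a⟩)
    rw [← isOpen_compl_iff]
    intro m n hn hmn hm
    obtain ⟨a, haA, ham⟩ := hm
    exact hn ⟨a, haA, ham.trans hmn⟩
  · rintro n ⟨a, haA, han⟩
    by_contra h
    exact (isClosed_closure (s := A)).isOpen_compl h han (subset_closure haA)

lemma kuratowskiPhi_step (j : ℕ) :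
    kuratowskiPhi {n : ℕ | Even n ∧ 2 * j ≤ n} = {n : ℕ | Even n ∧ 2 * (j + 1) ≤ n} := by
  unfold kuratowskiPhi
  rw [lower_closure_eq]
  have h1 : @closure ℕ lowerTopology {n : ℕ | Even n ∧ 2 * j ≤ n} ∩
      {n : ℕ | Even n ∧ 2 * j ≤ n}ᶜ = {n : ℕ | ¬ Even n ∧ 2 * j ≤ n} := by
    rw [lower_closure_eq]
    ext n
    simp only [Set.mem_inter_iff, Set.mem_setOf_eq, Set.mem_compl_iff, not_and,
      Nat.even_iff, Nat.not_even_iff] at *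
    constructor
    · rintro ⟨⟨a, ⟨ha2, hja⟩, han⟩, h⟩
      have h2j : 2 * j ≤ n := le_trans hja han
      refine ⟨?_, h2j⟩
      omega
    · rintro ⟨h1, h2⟩
      exact ⟨⟨2 * j, ⟨by omega, le_refl _⟩, h2⟩, fun h => by omega⟩
  rw [h1]
  ext n
  simp only [Set.mem_inter_iff, Set.mem_setOf_eq, Nat.even_iff, Nat.not_even_iff]
  constructor
  · rintro ⟨⟨hn2, hjn⟩, a, ⟨ha2, hja⟩, han⟩
    exact ⟨hn2, by omega⟩
  · rintro ⟨hn2, hn⟩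
    exact ⟨⟨hn2, by omega⟩, 2 * j + 1, ⟨by omega, by omega⟩, by omega⟩

/-- For `E` the even numbers and `φ(A) = A ∩ k(kA ∩ Aᶜ)` in the lower topology on `ℕ`,
the `j`-th iterate satisfies `φ^[j](E) = {n : Even n ∧ 2j ≤ n} = E ∩ [2j, ∞)`. -/
theorem kuratowskiPhi_iterate (j : ℕ) :
    kuratowskiPhi^[j] {n : ℕ | Even n} = {n : ℕ | Even n ∧ 2 * j ≤ n} := by
  induction j with
  | zero => simp
  | succ j ih =>
    rw [Function.iterate_succ_apply', ih, kuratowskiPhi_step]
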